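/- Let m ≥ 2 and d ≥ 2 be integers, c > 1 an integer, and b an integer coprime to c. Then ∑_{a ∈ (ℤ/cℤ)^{m−1}} A(d, a, c) = 0. -/

import Mathlib

open scoped BigOperators

/-- Extension of `a : Fin (m−1) → ℤ` by zero to all of `ℕ` (0-indexed). -/
def aseq (m : ℕ) (a : Fin (m - 1) → ℤ) (t : ℕ) : ℤ :=
  if h : t < m - 1 then a ⟨t, h⟩ else 0

/-- `σ_{ij}(a) = ∑_{k=i}^{j-1} a_k` (0-indexed: the sum of `a_t` for `i ≤ t < j`). -/
def sigmaSum (m : ℕ) (a : Fin (m - 1) → ℤ) (i j : ℕ) : ℤ :=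
  ∑ t ∈ Finset.Ico i j, aseq m a t

/-- `D(a) = ∏_{1 ≤ i < j ≤ m} σ_{ij}(a)`. -/
def Dprod (m : ℕ) (a : Fin (m - 1) → ℤ) : ℤ :=
  ∏ p ∈ Finset.univ.filter (fun p : Fin m × Fin m => p.1 < p.2),
    sigmaSum m a p.1.1 p.2.1

/-- `ν(d, a, c) = #{x ∈ (ℤ/cℤ)^m : b x_i^d − b x_{i+1}^d = a_i, 1 ≤ i ≤ m−1}`. -/
noncomputable def nuCount (m d : ℕ) (b : ℤ) (c : ℕ) (a : Fin (m - 1) → ℤ) : ℕ :=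
  Nat.card {x : Fin m → ZMod c //
    ∀ i : Fin (m - 1),
      (b : ZMod c) * x ⟨i.1, by have := i.isLt; omega⟩ ^ d -
        (b : ZMod c) * x ⟨i.1 + 1, by have := i.isLt; omega⟩ ^ d = ((a i : ℤ) : ZMod c)}

/-- `A(d, a, c) = ∏_{p^e ∥ c} (ν(d, a, p^e) − p^e)`, with `A(d, a, 1) = 1`. -/
noncomputable def Acoef (m d : ℕ) (b : ℤ) (c : ℕ) (a : Fin (m - 1) → ℤ) : ℤ :=
  ∏ p ∈ c.primeFactors,
    ((nuCount m d b (p ^ (c.factorization p)) a : ℤ) - (p : ℤ) ^ (c.factorization p))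

/-- `r_eff(a, p)`: the number of distinct components of a solution `y` of
`y_i − y_{i+1} = a_i (mod p)`, computed from the canonical solution `y_i = σ_{i,m}(a)`. -/
def reff (m : ℕ) (p : ℕ) (a : Fin (m - 1) → ℤ) : ℕ :=
  (Finset.image (fun i : Fin m => ((sigmaSum m a i.1 (m - 1) : ℤ) : ZMod p))
    Finset.univ).card

/- ### Auxiliary lemmas -/

/-- The difference map appearing in `nuCount`. -/
def fmap (m d : ℕ) (b : ℤ) (q : ℕ) (x : Fin m → ZMod q) (i : Fin (m - 1)) : ZMod q :=
  (b : ZMod q) * x ⟨i.1, by have := i.isLt; omega⟩ ^ d -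
    (b : ZMod q) * x ⟨i.1 + 1, by have := i.isLt; omega⟩ ^ d

lemma nuCount_congr (m d : ℕ) (b : ℤ) (q : ℕ) (a a' : Fin (m - 1) → ℤ)
    (h : ∀ i, ((a i : ℤ) : ZMod q) = ((a' i : ℤ) : ZMod q)) :
    nuCount m d b q a = nuCount m d b q a' := by
  unfold nuCount
  apply Nat.card_congr
  exact Equiv.subtypeEquivRight fun x => forall_congr' fun i => by rw [h i]

lemma nuCount_eq_card_fiber (m d : ℕ) (b : ℤ) (q : ℕ) [NeZero q] (y : Fin (m - 1) → ZMod q) :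
    nuCount m d b q (fun i => ((y i).val : ℤ)) =
      Fintype.card {x : Fin m → ZMod q // fmap m d b q x = y} := by
  rw [nuCount, Nat.card_eq_fintype_card]
  apply Fintype.card_congr
  apply Equiv.subtypeEquivRight
  intro x
  rw [funext_iff]
  apply forall_congr'
  intro i
  simp only [fmap, Int.cast_natCast, ZMod.natCast_zmod_val]

lemma sum_nuCount (m d : ℕ) (b : ℤ) (q : ℕ) [NeZero q] :
    ∑ y : Fin (m - 1) → ZMod q, nuCount m d b q (fun i => ((y i).val : ℤ)) = q ^ m := by
  classical
  calc ∑ y : Fin (m - 1) → ZMod q, nuCount m d b q (fun i => ((y i).val : ℤ))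
      = ∑ y : Fin (m - 1) → ZMod q, Fintype.card {x // fmap m d b q x = y} :=
        Finset.sum_congr rfl fun y _ => nuCount_eq_card_fiber m d b q y
    _ = Fintype.card ((y : Fin (m - 1) → ZMod q) × {x // fmap m d b q x = y}) := by
        rw [Fintype.card_sigma]
    _ = Fintype.card (Fin m → ZMod q) := Fintype.card_congr (Equiv.sigmaFiberEquiv _)
    _ = q ^ m := by simp [ZMod.card]

lemma sum_factor (m d : ℕ) (b : ℤ) (q : ℕ) [NeZero q] (hm : 2 ≤ m) :
    ∑ y : Fin (m - 1) → ZMod q,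
      ((nuCount m d b q (fun i => ((y i).val : ℤ)) : ℤ) - (q : ℤ)) = 0 := by
  rw [Finset.sum_sub_distrib, Finset.sum_const]
  rw [← Nat.cast_sum, sum_nuCount]
  simp only [Finset.card_univ, Fintype.card_pi, Fintype.card_fin, ZMod.card,
    Finset.prod_const, Finset.card_univ, Fintype.card_fin, nsmul_eq_mul]
  push_cast
  rw [← pow_succ]
  have : m - 1 + 1 = m := by omega
  rw [this, sub_eq_zero]

lemma sum_split (k q n : ℕ) [NeZero q] [NeZero n] (hcop : Nat.Coprime q n)
    (F G : (Fin k → ℤ) → ℤ)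
    (hF : ∀ a a' : Fin k → ℤ, (∀ i, ((a i : ℤ) : ZMod q) = ((a' i : ℤ) : ZMod q)) → F a = F a')
    (hG : ∀ a a' : Fin k → ℤ, (∀ i, ((a i : ℤ) : ZMod n) = ((a' i : ℤ) : ZMod n)) → G a = G a') :
    ∑ a ∈ Fintype.piFinset (fun _ : Fin k => Finset.range (q * n)),
        F (fun i => (a i : ℤ)) * G (fun i => (a i : ℤ)) =
      (∑ u : Fin k → ZMod q, F (fun i => ((u i).val : ℤ))) *
        (∑ v : Fin k → ZMod n, G (fun i => ((v i).val : ℤ))) := by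
  haveI : NeZero (q * n) := ⟨Nat.mul_ne_zero (NeZero.ne q) (NeZero.ne n)⟩
  -- Step 1: reindex the sum over `piFinset (range (q*n))` as a sum over `Fin k → ZMod (q*n)`.
  have step1 : ∑ a ∈ Fintype.piFinset (fun _ : Fin k => Finset.range (q * n)),
      F (fun i => (a i : ℤ)) * G (fun i => (a i : ℤ)) =
      ∑ y : Fin k → ZMod (q * n),
        F (fun i => ((y i).val : ℤ)) * G (fun i => ((y i).val : ℤ)) := by
    apply Finset.sum_nbij' (i := fun a => fun i => ((a i : ZMod (q * n))))
      (j := fun y => fun i => (y i).val)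
    · intro a _; exact Finset.mem_univ _
    · intro y _
      simp only [Fintype.mem_piFinset, Finset.mem_range]
      intro i
      exact ZMod.val_lt _
    · intro a ha
      funext i
      simp only [Fintype.mem_piFinset, Finset.mem_range] at ha
      exact ZMod.val_natCast_of_lt (ha i)
    · intro y _
      funext i
      exact ZMod.natCast_zmod_val (y i)
    · intro a ha
      simp only [Fintype.mem_piFinset, Finset.mem_range] at ha
      have : (fun i => ((a i : ℕ) : ℤ)) = fun i => (((a i : ZMod (q * n)).val : ℕ) : ℤ) := by
        funext i
        rw [ZMod.val_natCast_of_lt (ha i)]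
      rw [this]
  rw [step1]
  -- Step 2: use the CRT equivalence.
  let φ := ZMod.chineseRemainder hcop
  let e : (Fin k → ZMod (q * n)) ≃ (Fin k → ZMod q) × (Fin k → ZMod n) :=
    (Equiv.piCongrRight fun _ => φ.toEquiv).trans (Equiv.arrowProdEquivProdArrow _ _ _)
  have step2 : ∑ y : Fin k → ZMod (q * n),
      F (fun i => ((y i).val : ℤ)) * G (fun i => ((y i).val : ℤ)) =
      ∑ w : (Fin k → ZMod q) × (Fin k → ZMod n),
        F (fun i => ((w.1 i).val : ℤ)) * G (fun i => ((w.2 i).val : ℤ)) := by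
    apply Fintype.sum_bijective e e.bijective
    intro y
    have h1 : F (fun i => ((y i).val : ℤ)) = F (fun i => (((e y).1 i).val : ℤ)) := by
      apply hF
      intro i
      have : (e y).1 i = (φ (y i)).1 := rfl
      rw [this]
      show (((y i).val : ℤ) : ZMod q) = (((φ (y i)).1.val : ℤ) : ZMod q)
      push_cast
      rw [ZMod.natCast_val, ZMod.natCast_val, ZMod.cast_id]
      show (ZMod.cast (y i) : ZMod q) = (φ (y i)).1
      have : φ (y i) = ZMod.castHom (show Nat.lcm q n ∣ q * n by simp [Nat.lcm_dvd_iff])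
          (ZMod q × ZMod n) (y i) := rfl
      rw [this, ZMod.castHom_apply, Prod.fst_zmod_cast]
    have h2 : G (fun i => ((y i).val : ℤ)) = G (fun i => (((e y).2 i).val : ℤ)) := by
      apply hG
      intro i
      have : (e y).2 i = (φ (y i)).2 := rfl
      rw [this]
      show (((y i).val : ℤ) : ZMod n) = (((φ (y i)).2.val : ℤ) : ZMod n)
      push_cast
      rw [ZMod.natCast_val, ZMod.natCast_val, ZMod.cast_id]
      show (ZMod.cast (y i) : ZMod n) = (φ (y i)).2
      have : φ (y i) = ZMod.castHom (show Nat.lcm q n ∣ q * n by simp [Nat.lcm_dvd_iff])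
          (ZMod q × ZMod n) (y i) := rfl
      rw [this, ZMod.castHom_apply, Prod.snd_zmod_cast]
    rw [h1, h2]
  rw [step2, Fintype.sum_prod_type]
  dsimp only
  rw [← Finset.sum_mul_sum]

theorem statement12 (m d : ℕ) (hm : 2 ≤ m) (hd : 2 ≤ d) (c : ℕ) (hc : 1 < c)
    (b : ℤ) (hb : IsCoprime b ((c : ℤ))) :
    ∑ a ∈ Fintype.piFinset (fun _ : Fin (m - 1) => Finset.range c),
      Acoef m d b c (fun i => (a i : ℤ)) = 0 := by
  have hc0 : c ≠ 0 := by omega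
  set p := c.minFac with hpdef
  have hpp : p.Prime := Nat.minFac_prime (by omega)
  have hpc : p ∣ c := Nat.minFac_dvd c
  set e := c.factorization p with hedef
  have he : e ≠ 0 := by
    have := (Nat.Prime.factorization_pos_of_dvd hpp hc0 hpc)
    omega
  set q := p ^ e with hqdef
  set n := c / q with hndef
  have hqc : q ∣ c := Nat.ordProj_dvd c p
  have hq0 : q ≠ 0 := pow_ne_zero _ hpp.pos.ne'
  have hq1 : 1 < q := Nat.one_lt_pow he hpp.one_lt
  have hcqn : c = q * n := (Nat.mul_div_cancel' hqc).symm
  have hn0 : n ≠ 0 := by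
    intro h
    rw [h, mul_zero] at hcqn
    exact hc0 hcqn
  have hcop : Nat.Coprime q n := (Nat.coprime_ordCompl hpp hc0).pow_left _
  have hpn : p ∉ n.primeFactors := by
    intro h
    have hdvd : p ∣ n := Nat.dvd_of_mem_primeFactors h
    have : p ∣ q := dvd_pow_self p he
    have hg : p ∣ Nat.gcd q n := Nat.dvd_gcd this hdvd
    rw [hcop] at hg
    have := Nat.le_of_dvd one_pos hg
    have := hpp.two_le
    omega
  have hpf : c.primeFactors = insert p n.primeFactors := by
    rw [hcqn, Nat.primeFactors_mul hq0 hn0, hqdef,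
      Nat.primeFactors_prime_pow he hpp, ← Finset.insert_eq]
  have hfact : ∀ p' ∈ n.primeFactors, c.factorization p' = n.factorization p' := by
    intro p' hp'
    have hne : p' ≠ p := fun h => hpn (h ▸ hp')
    rw [hcqn, Nat.factorization_mul hq0 hn0]
    simp only [Finsupp.coe_add, Pi.add_apply]
    rw [hqdef, hpp.factorization_pow, Finsupp.single_apply, if_neg (fun h => hne h.symm)]
    omega
  have hfp : c.factorization p = e := rfl
  -- componentwise factorization of Acoef
  set F : (Fin (m - 1) → ℤ) → ℤ := fun a => (nuCount m d b q a : ℤ) - (q : ℤ) with hFdef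
  set G : (Fin (m - 1) → ℤ) → ℤ := fun a =>
    ∏ p' ∈ n.primeFactors,
      ((nuCount m d b (p' ^ (n.factorization p')) a : ℤ) - (p' : ℤ) ^ (n.factorization p'))
    with hGdef
  have hsplit : ∀ a : Fin (m - 1) → ℤ, Acoef m d b c a = F a * G a := by
    intro a
    rw [Acoef, hpf, Finset.prod_insert hpn]
    congr 1
    · rw [hGdef]
      exact Finset.prod_congr rfl fun p' hp' => by rw [hfact p' hp']
  haveI : NeZero q := ⟨hq0⟩
  haveI : NeZero n := ⟨hn0⟩
  calc ∑ a ∈ Fintype.piFinset (fun _ : Fin (m - 1) => Finset.range c),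
        Acoef m d b c (fun i => (a i : ℤ))
      = ∑ a ∈ Fintype.piFinset (fun _ : Fin (m - 1) => Finset.range (q * n)),
        F (fun i => (a i : ℤ)) * G (fun i => (a i : ℤ)) := by
        rw [← hcqn]
        exact Finset.sum_congr rfl fun a _ => hsplit _
    _ = (∑ u : Fin (m - 1) → ZMod q, F (fun i => ((u i).val : ℤ))) *
        (∑ v : Fin (m - 1) → ZMod n, G (fun i => ((v i).val : ℤ))) := by
        apply sum_split _ _ _ hcop
        · intro a a' h
          rw [hFdef]
          simp only
          rw [nuCount_congr m d b q a a' h]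
        · intro a a' h
          rw [hGdef]
          apply Finset.prod_congr rfl
          intro p' hp'
          have hdvd : p' ^ (n.factorization p') ∣ n := Nat.ordProj_dvd n p'
          have hcongr : ∀ i, ((a i : ℤ) : ZMod (p' ^ (n.factorization p'))) =
              ((a' i : ℤ) : ZMod (p' ^ (n.factorization p'))) := by
            intro i
            have hhom := ZMod.castHom hdvd (ZMod (p' ^ (n.factorization p')))
            calc ((a i : ℤ) : ZMod (p' ^ (n.factorization p')))
                = (ZMod.castHom hdvd (ZMod (p' ^ (n.factorization p')))) ((a i : ℤ) : ZMod n) := by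
                  rw [map_intCast]
              _ = (ZMod.castHom hdvd (ZMod (p' ^ (n.factorization p')))) ((a' i : ℤ) : ZMod n) := by
                  rw [h i]
              _ = ((a' i : ℤ) : ZMod (p' ^ (n.factorization p'))) := by rw [map_intCast]
          rw [nuCount_congr m d b _ a a' hcongr]
    _ = 0 := by
        rw [sum_factor m d b q hm, zero_mul]
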